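/- Let ξ and η be random measures on a measurable space (S, 𝒮). If (ξ(A₁), …, ξ(Aₙ)) and (η(A₁), …, η(Aₙ)) are equal in distribution for every n ≥ 1 and every family of pairwise disjoint measurable sets A₁, …, Aₙ, then ξ and η are equal in distribution as random measures. -/

import Mathlib

open MeasureTheory
open scoped ENNReal

namespace StmtAux

variable {S : Type*} [MeasurableSpace S]

noncomputable def atom {n : ℕ} (A : Fin n → Set S) (t : Fin n → Bool) : Set S :=
  ⋂ i, (if t i then A i else (A i)ᶜ)

lemma measurableSet_atom {n : ℕ} {A : Fin n → Set S} (hA : ∀ i, MeasurableSet (A i))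
    (t : Fin n → Bool) : MeasurableSet (atom A t) :=
  MeasurableSet.iInter fun i => by
    split
    · exact hA i
    · exact (hA i).compl

lemma pairwise_disjoint_atom {n : ℕ} (A : Fin n → Set S) :
    Pairwise (Function.onFun Disjoint fun t : Fin n → Bool => atom A t) := by
  intro t t' htt'
  obtain ⟨i, hi⟩ := Function.ne_iff.1 htt'
  refine Set.disjoint_left.2 fun x hx hx' => ?_
  have h1 := Set.mem_iInter.1 hx i
  have h2 := Set.mem_iInter.1 hx' i
  cases ht : t i <;> cases ht' : t' i <;> simp_all

lemma iUnion_atom {n : ℕ} (A : Fin n → Set S) : (⋃ t, atom A t) = Set.univ := by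
  classical
  ext x
  simp only [Set.mem_iUnion, Set.mem_univ, iff_true]
  refine ⟨fun i => decide (x ∈ A i), Set.mem_iInter.2 fun i => ?_⟩
  by_cases h : x ∈ A i <;> simp [h]

lemma measure_eq_sum_atom {n : ℕ} {A : Fin n → Set S} (hA : ∀ i, MeasurableSet (A i))
    (μ : Measure S) (i : Fin n) :
    μ (A i) = ∑ t : Fin n → Bool, if t i then μ (atom A t) else 0 := by
  have hcov : A i = ⋃ t, A i ∩ atom A t := by
    rw [← Set.inter_iUnion, iUnion_atom, Set.inter_univ]
  have hdis : Pairwise (Function.onFun Disjoint fun t : Fin n → Bool => A i ∩ atom A t) :=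
    fun t t' h => ((pairwise_disjoint_atom A h).mono Set.inter_subset_right Set.inter_subset_right)
  rw [hcov, measure_iUnion hdis (fun t => (hA i).inter (measurableSet_atom hA t)), tsum_fintype]
  refine Finset.sum_congr rfl fun t _ => ?_
  by_cases ht : t i = true
  · have hsub : atom A t ⊆ A i := fun x hx => by
      have := Set.mem_iInter.1 hx i; simpa [ht] using this
    rw [Set.inter_eq_right.2 hsub]
    simp [ht]
  · have hempty : A i ∩ atom A t = ∅ := by
      ext x
      simp only [Set.mem_inter_iff, Set.mem_empty_iff_false, iff_false, not_and]
      intro hxA hxC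
      have := Set.mem_iInter.1 hxC i
      simp [ht, hxA] at this
    rw [hempty]
    simp [ht]

lemma map_eval_eq {Ω : Type*} [MeasurableSpace Ω] (P : Measure Ω)
    (ξ η : Ω → Measure S) (hξ : Measurable ξ) (hη : Measurable η)
    (h : ∀ (n : ℕ) (A : Fin n → Set S), (∀ i, MeasurableSet (A i)) →
      Pairwise (Function.onFun Disjoint A) →
      P.map (fun ω => fun i => ξ ω (A i)) = P.map (fun ω => fun i => η ω (A i)))
    (n : ℕ) (A : Fin n → Set S) (hA : ∀ i, MeasurableSet (A i)) :
    P.map (fun ω => fun i => ξ ω (A i)) = P.map (fun ω => fun i => η ω (A i)) := by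
  classical
  let e : Fin (2 ^ n) ≃ (Fin n → Bool) :=
    finFunctionFinEquiv.symm.trans (Equiv.arrowCongr (Equiv.refl _) finTwoEquiv)
  set D : Fin (2 ^ n) → Set S := fun j => atom A (e j) with hD
  have hDmeas : ∀ j, MeasurableSet (D j) := fun j => measurableSet_atom hA (e j)
  have hDdisj : Pairwise (Function.onFun Disjoint D) := fun j j' hjj' =>
    pairwise_disjoint_atom A (fun hc => hjj' (e.injective hc))
  set F : (Fin (2 ^ n) → ℝ≥0∞) → (Fin n → ℝ≥0∞) :=
    fun v i => ∑ j, if e j i then v j else 0 with hF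
  have hFmeas : Measurable F := by
    refine measurable_pi_lambda _ fun i => Finset.measurable_sum _ fun j _ => ?_
    cases hj : (e j) i
    · simpa [hj] using (measurable_const : Measurable fun _ : Fin (2 ^ n) → ℝ≥0∞ => (0 : ℝ≥0∞))
    · simpa [hj] using (measurable_pi_apply j : Measurable fun v : Fin (2 ^ n) → ℝ≥0∞ => v j)
  have key : ∀ μ : Measure S, (fun i => μ (A i)) = F (fun j => μ (D j)) := by
    intro μ
    funext i
    rw [measure_eq_sum_atom hA μ i]
    simp only [hF]
    rw [← Equiv.sum_comp e (fun t => if t i then μ (atom A t) else 0)]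
  have hmξ : Measurable fun ω => fun j => ξ ω (D j) :=
    measurable_pi_lambda _ fun j => (Measure.measurable_coe (hDmeas j)).comp hξ
  have hmη : Measurable fun ω => fun j => η ω (D j) :=
    measurable_pi_lambda _ fun j => (Measure.measurable_coe (hDmeas j)).comp hη
  calc P.map (fun ω => fun i => ξ ω (A i))
      = P.map (F ∘ fun ω => fun j => ξ ω (D j)) := by
        congr 1; funext ω; exact key (ξ ω)
    _ = (P.map (fun ω => fun j => ξ ω (D j))).map F := (Measure.map_map hFmeas hmξ).symm
    _ = (P.map (fun ω => fun j => η ω (D j))).map F := by rw [h (2 ^ n) D hDmeas hDdisj]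
    _ = P.map (F ∘ fun ω => fun j => η ω (D j)) := Measure.map_map hFmeas hmη
    _ = P.map (fun ω => fun i => η ω (A i)) := by
        congr 1; funext ω; exact (key (η ω)).symm

end StmtAux

/-- If two random measures have equal finite-dimensional distributions over all
finite families of pairwise disjoint measurable sets, then they are equal in
distribution. -/
theorem stmt_1 {Ω S : Type*} [MeasurableSpace Ω] [MeasurableSpace S]
    (P : Measure Ω) [IsProbabilityMeasure P]
    (ξ η : Ω → Measure S) (hξ : Measurable ξ) (hη : Measurable η)
    (h : ∀ (n : ℕ) (A : Fin n → Set S), (∀ i, MeasurableSet (A i)) →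
      Pairwise (Function.onFun Disjoint A) →
      P.map (fun ω => fun i => ξ ω (A i)) = P.map (fun ω => fun i => η ω (A i))) :
    P.map ξ = P.map η := by
  classical
  set C : Set (Set (Measure S)) :=
    {T | ∃ (n : ℕ) (A : Fin n → Set S) (B : Fin n → Set ℝ≥0∞),
      (∀ i, MeasurableSet (A i)) ∧ (∀ i, MeasurableSet (B i)) ∧
      T = {μ | ∀ i, μ (A i) ∈ B i}} with hCdef
  have hpi : IsPiSystem C := by
    rintro T₁ ⟨n, A, B, hA, hB, rfl⟩ T₂ ⟨m, A', B', hA', hB', rfl⟩ -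
    refine ⟨n + m, Fin.append A A', Fin.append B B', ?_, ?_, ?_⟩
    · intro i
      refine Fin.addCases (fun i => ?_) (fun i => ?_) i
      · simpa [Fin.append_left] using hA i
      · simpa [Fin.append_right] using hA' i
    · intro i
      refine Fin.addCases (fun i => ?_) (fun i => ?_) i
      · simpa [Fin.append_left] using hB i
      · simpa [Fin.append_right] using hB' i
    · ext μ
      simp only [Set.mem_inter_iff, Set.mem_setOf_eq]
      constructor
      · rintro ⟨h1, h2⟩ i
        refine Fin.addCases (fun i => ?_) (fun i => ?_) i
        · simpa [Fin.append_left] using h1 i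
        · simpa [Fin.append_right] using h2 i
      · intro hμ
        exact ⟨fun i => by simpa [Fin.append_left] using hμ (Fin.castAdd m i),
               fun i => by simpa [Fin.append_right] using hμ (Fin.natAdd n i)⟩
  have hgen : (inferInstance : MeasurableSpace (Measure S)) = MeasurableSpace.generateFrom C := by
    apply le_antisymm
    · show Measure.instMeasurableSpace ≤ _
      rw [Measure.instMeasurableSpace]
      refine iSup₂_le fun s hs => ?_
      rw [← BorelSpace.measurable_eq (α := ℝ≥0∞)]
      refine Measurable.comap_le ?_
      intro B hB
      apply MeasurableSpace.measurableSet_generateFrom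
      refine ⟨1, fun _ => s, fun _ => B, fun _ => hs, fun _ => hB, ?_⟩
      ext μ
      simp [Fin.forall_fin_one]
    · refine MeasurableSpace.generateFrom_le ?_
      rintro T ⟨n, A, B, hA, hB, rfl⟩
      have hT : {μ : Measure S | ∀ i, μ (A i) ∈ B i} = ⋂ i, (fun μ : Measure S => μ (A i)) ⁻¹' B i := by
        ext μ; simp
      rw [hT]
      exact MeasurableSet.iInter fun i => (Measure.measurable_coe (hA i)) (hB i)
  haveI : IsProbabilityMeasure (P.map ξ) := Measure.isProbabilityMeasure_map hξ.aemeasurable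
  haveI : IsProbabilityMeasure (P.map η) := Measure.isProbabilityMeasure_map hη.aemeasurable
  refine MeasureTheory.ext_of_generate_finite C hgen hpi ?_ ?_
  · rintro T ⟨n, A, B, hA, hB, rfl⟩
    have hTmeas : MeasurableSet {μ : Measure S | ∀ i, μ (A i) ∈ B i} := by
      have hT : {μ : Measure S | ∀ i, μ (A i) ∈ B i} = ⋂ i, (fun μ : Measure S => μ (A i)) ⁻¹' B i := by
        ext μ; simp
      rw [hT]
      exact MeasurableSet.iInter fun i => (Measure.measurable_coe (hA i)) (hB i)
    have hjoint := StmtAux.map_eval_eq P ξ η hξ hη h n A hA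
    have hξ' : Measurable fun ω => fun i => ξ ω (A i) :=
      measurable_pi_lambda _ fun i => (Measure.measurable_coe (hA i)).comp hξ
    have hη' : Measurable fun ω => fun i => η ω (A i) :=
      measurable_pi_lambda _ fun i => (Measure.measurable_coe (hA i)).comp hη
    rw [Measure.map_apply hξ hTmeas, Measure.map_apply hη hTmeas]
    have e1 : ξ ⁻¹' {μ | ∀ i, μ (A i) ∈ B i}
        = (fun ω => fun i => ξ ω (A i)) ⁻¹' (Set.univ.pi B) := by
      ext ω; simp [Set.mem_pi]
    have e2 : η ⁻¹' {μ | ∀ i, μ (A i) ∈ B i}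
        = (fun ω => fun i => η ω (A i)) ⁻¹' (Set.univ.pi B) := by
      ext ω; simp [Set.mem_pi]
    rw [e1, e2, ← Measure.map_apply hξ' (MeasurableSet.univ_pi hB),
      ← Measure.map_apply hη' (MeasurableSet.univ_pi hB), hjoint]
  · simp [measure_univ]
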